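/- The degree-2 component of Y := -Ξ^{-1} + x_0 s(Ξ) x_0 equals (1/2)\sum_{k<l}[x_k,x_l] - (1/2)x_0^2 = -\sum_{k>l} x_k x_l - (1/2)\sum_{k=1}^n x_k^2. -/

import Mathlib

/-- Words in the generators `x_1, …, x_n` (indexed by `Fin n`). -/
abbrev Word (n : ℕ) := List (Fin n)

/-- The completed tensor algebra `T = ∏ₘ H^{⊗m}` on the basis `x_1, …, x_n` of `H`,
modeled as the space of ℚ-valued coefficient functions on words in the generators. -/
abbrev T (n : ℕ) : Type := Word n → ℚ

/-- The generator `x_k` as an element of `T n`. -/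
def xgen {n : ℕ} (k : Fin n) : T n := fun w => if w = [k] then 1 else 0

/-- `x₀ = -∑ₖ xₖ`. -/
def x0 (n : ℕ) : T n := -∑ k : Fin n, xgen k

/-- The operation `⋄` on `T_{≥1}`, determined on monomials by
`(x_{i_1}⋯x_{i_{l-1}}x_{i_l}) ⋄ (x_{j_1}x_{j_2}⋯x_{j_m})
  = -δ_{i_l j_1} x_{i_1}⋯x_{i_{l-1}} x_{j_1}x_{j_2}⋯x_{j_m}`,
extended bilinearly and continuously. -/
def dia {n : ℕ} (f g : T n) : T n :=
  fun w => -∑ i ∈ Finset.range w.length, f (w.take (i + 1)) * g (w.drop i)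

/-- `f ∈ T_{≥p}`: all components of degree `< p` vanish. -/
def degGE {n : ℕ} (p : ℕ) (f : T n) : Prop := ∀ w : Word n, w.length < p → f w = 0

/-- The unit `1 ∈ T n` for the tensor product. -/
def oneT {n : ℕ} : T n := fun w => if w = [] then 1 else 0

/-- The (completed) tensor product on `T n`: concatenation product. -/
def mulT {n : ℕ} (f g : T n) : T n :=
  fun w => ∑ i ∈ Finset.range (w.length + 1), f (w.take i) * g (w.drop i)

/-- Powers with respect to the tensor product. -/
def powT {n : ℕ} (f : T n) : ℕ → T n
  | 0 => oneT
  | m + 1 => mulT f (powT f m)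

/-- Ordered product of a list of elements of `T n`. -/
def prodT {n : ℕ} : List (T n) → T n
  | [] => oneT
  | a :: l => mulT a (prodT l)

/-- Substitution of an element `a ∈ T_{≥1}` into a formal power series `F ∈ ℚ[[z]]`:
`F(a) = ∑ₘ (coeff m F) aᵐ`, a finite sum in each degree. -/
noncomputable def substT {n : ℕ} (F : PowerSeries ℚ) (a : T n) : T n :=
  fun w => ∑ m ∈ Finset.range (w.length + 1), PowerSeries.coeff m F * powT a m w

/-- The exponential `e^a` for `a ∈ T_{≥1}`. -/
noncomputable def expT {n : ℕ} (a : T n) : T n := substT (PowerSeries.exp ℚ) a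

/-- The power series `log(1+z) = ∑_{m≥1} (-1)^{m+1} zᵐ/m`. -/
def logSeries : PowerSeries ℚ :=
  PowerSeries.mk fun m => if m = 0 then 0 else (-1 : ℚ) ^ (m + 1) / (m : ℚ)

/-- The logarithm `log a` for `a ∈ 1 + T_{≥1}`. -/
noncomputable def logT {n : ℕ} (a : T n) : T n := substT logSeries (a - oneT)

/-- The Baker–Campbell–Hausdorff product `Ξ = x₁ * x₂ * ⋯ * xₙ = log(e^{x₁}e^{x₂}⋯e^{xₙ})`. -/
noncomputable def Xi (n : ℕ) : T n := logT (prodT ((List.finRange n).map fun k => expT (xgen k)))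

/-- The continuous algebra automorphism `Q` of `T n` with `Q(x_k) = -x_{n-k+1}`
(reversing and negating the basis). -/
def Qauto {n : ℕ} (f : T n) : T n := fun w => (-1 : ℚ) ^ w.length * f (w.map Fin.rev)

/-- `s(z) = 1/(e^{-z}-1) + 1/z` is characterized in `ℚ[[z]]` by the equation
`s(z) · (z·(e^{-z}-1)) = z + (e^{-z}-1)`. -/
def sSpec (s : PowerSeries ℚ) : Prop :=
  s * (PowerSeries.X * (PowerSeries.rescale (-1) (PowerSeries.exp ℚ) - 1)) =
    PowerSeries.X + (PowerSeries.rescale (-1) (PowerSeries.exp ℚ) - 1)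

/-- `g(z) = z/(e^{-z}-1)` is characterized in `ℚ[[z]]` by `g(z)·(e^{-z}-1) = z`. -/
def gSpec (g : PowerSeries ℚ) : Prop :=
  g * (PowerSeries.rescale (-1) (PowerSeries.exp ℚ) - 1) = PowerSeries.X

section Aux
variable {n : ℕ}

lemma mulT_oneT (f : T n) : mulT f oneT = f := by
  funext w
  unfold mulT oneT
  rw [Finset.sum_eq_single w.length]
  · simp
  · intro i hi hne
    rw [Finset.mem_range] at hi
    have h : w.drop i ≠ [] := by
      intro hc
      have := List.drop_eq_nil_iff.mp hc
      omega
    simp [h]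
  · intro h
    simp [Finset.mem_range] at h

lemma x0_apply (w : Word n) : x0 n w = if w.length = 1 then -1 else 0 := by
  rcases w with _ | ⟨a, _ | ⟨b, t⟩⟩ <;>
    simp [x0, xgen, Finset.sum_apply, Finset.sum_ite_eq]

lemma mulT_xgen_xgen (k l : Fin n) (w : Word n) :
    mulT (xgen k) (xgen l) w = if w = [k, l] then 1 else 0 := by
  by_cases hw : w = [k, l]
  · subst hw
    simp [mulT, xgen, Finset.sum_range_succ]
  · rw [if_neg hw]
    apply Finset.sum_eq_zero
    intro i hi
    by_cases h1 : w.take i = [k]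
    · by_cases h2 : w.drop i = [l]
      · exact absurd (by rw [← List.take_append_drop i w, h1, h2]; rfl) hw
      · simp [xgen, h2]
    · simp [xgen, h1]

lemma mulT_x0_x0 (w : Word n) : mulT (x0 n) (x0 n) w = if w.length = 2 then 1 else 0 := by
  unfold mulT
  simp only [x0_apply, List.length_take, List.length_drop]
  split_ifs with h
  · rw [Finset.sum_eq_single 1]
    · simp [h]
    · intro i hi hne
      rw [Finset.mem_range] at hi
      split_ifs with h1 h2 <;> [omega; ring; ring; ring]
    · intro hmem; exfalso; rw [Finset.mem_range] at hmem; omega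
  · apply Finset.sum_eq_zero
    intro i hi
    rw [Finset.mem_range] at hi
    split_ifs with h1 h2 <;> [omega; ring; ring; ring]


lemma powT_one (f : T n) : powT f 1 = f := mulT_oneT f

lemma powT_two (f : T n) : powT f 2 = mulT f f := by
  show mulT f (mulT f oneT) = mulT f f
  rw [mulT_oneT]

lemma expT_nil (k : Fin n) : expT (xgen k) [] = 1 := by
  simp [expT, substT, powT, oneT, PowerSeries.coeff_exp]

lemma expT_one (k : Fin n) (a : Fin n) :
    expT (xgen k) [a] = if a = k then 1 else 0 := by
  simp [expT, substT, Finset.sum_range_succ, powT, mulT_oneT, oneT, xgen,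
    PowerSeries.coeff_exp]

lemma expT_two (k : Fin n) (a b : Fin n) :
    expT (xgen k) [a, b] = if a = k ∧ b = k then 1/2 else 0 := by
  simp [expT, substT, Finset.sum_range_succ, powT, mulT_oneT, mulT_xgen_xgen,
    oneT, xgen, PowerSeries.coeff_exp]


lemma prodT_exp (l : List (Fin n)) (hl : l.Pairwise (· < ·)) :
    (prodT (l.map fun k => expT (xgen k)) [] = 1) ∧
    (∀ a, prodT (l.map fun k => expT (xgen k)) [a] = if a ∈ l then 1 else 0) ∧
    (∀ a b, prodT (l.map fun k => expT (xgen k)) [a, b] =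
      if a ∈ l ∧ b ∈ l ∧ a < b then 1 else if a = b ∧ a ∈ l then 1/2 else 0) := by
  induction l with
  | nil =>
    refine ⟨rfl, fun a => by simp [prodT, oneT], fun a b => by simp [prodT, oneT]⟩
  | cons k l ih =>
    rw [List.pairwise_cons] at hl
    obtain ⟨hk, hl'⟩ := hl
    obtain ⟨ih0, ih1, ih2⟩ := ih hl'
    refine ⟨?_, ?_, ?_⟩
    · show mulT (expT (xgen k)) _ [] = 1
      simp [mulT, expT_nil, ih0]
    · intro a
      show mulT (expT (xgen k)) _ [a] = _
      simp only [mulT, List.length_cons, List.length_nil, Finset.sum_range_succ,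
        Finset.sum_range_zero, List.take_zero, List.take_succ_cons, List.take_nil,
        List.drop_zero, List.drop_succ_cons, List.drop_nil, expT_nil, expT_one,
        ih0, ih1, zero_add, one_mul, mul_one]
      have h1 : a ∈ l → a ≠ k := fun h he => absurd (he ▸ hk a h) (lt_irrefl k)
      by_cases hak : a = k <;> by_cases hal : a ∈ l <;>
        simp_all
    · intro a b
      show mulT (expT (xgen k)) _ [a, b] = _
      simp only [mulT, List.length_cons, List.length_nil, Finset.sum_range_succ,
        Finset.sum_range_zero, List.take_zero, List.take_succ_cons, List.take_nil,
        List.drop_zero, List.drop_succ_cons, List.drop_nil, expT_nil, expT_one,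
        expT_two, ih0, ih1, ih2, zero_add, one_mul, mul_one]
      have h1 : a ∈ l → a ≠ k := fun h he => absurd (he ▸ hk a h) (lt_irrefl k)
      have h2 : b ∈ l → b ≠ k := fun h he => absurd (he ▸ hk b h) (lt_irrefl k)
      have h3 : a ∈ l → k < a := hk a
      have h4 : b ∈ l → k < b := hk b
      by_cases hak : a = k <;> by_cases hbk : b = k <;>
        by_cases hal : a ∈ l <;> by_cases hbl : b ∈ l <;>
        simp_all <;>
        first
          | rw [if_neg (asymm (hk a ‹a ∈ l›))]
          | rw [if_neg (fun h : k = b => ‹¬b = k› h.symm)]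
          | exact fun h => ‹¬b = k› h.symm
          | exact le_of_lt (hk a ‹a ∈ l›)


lemma P_nil : prodT ((List.finRange n).map fun k => expT (xgen k)) ([] : Word n) = 1 :=
  (prodT_exp _ (List.pairwise_lt_finRange n)).1

lemma P_one (a : Fin n) : prodT ((List.finRange n).map fun k => expT (xgen k)) [a] = 1 := by
  rw [(prodT_exp _ (List.pairwise_lt_finRange n)).2.1 a]
  simp

lemma P_two (a b : Fin n) : prodT ((List.finRange n).map fun k => expT (xgen k)) [a, b]
    = if a < b then 1 else if a = b then 1/2 else 0 := by
  rw [(prodT_exp _ (List.pairwise_lt_finRange n)).2.2 a b]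
  simp

lemma Xi_one (a : Fin n) : Xi n [a] = 1 := by
  rw [Xi, logT]
  simp only [substT, powT_one]
  simp [Finset.sum_range_succ, powT, mulT_oneT, logSeries, oneT, Pi.sub_apply, P_one]

lemma Xi_two (a b : Fin n) :
    Xi n [a, b] = (if a < b then (1:ℚ) else if a = b then 1/2 else 0) - 1/2 := by
  have hmul : mulT (prodT ((List.finRange n).map fun k => expT (xgen k)) - oneT)
      (prodT ((List.finRange n).map fun k => expT (xgen k)) - oneT) [a, b] = 1 := by
    simp [mulT, Finset.sum_range_succ, Pi.sub_apply, P_nil, P_one, P_two, oneT]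
  rw [Xi, logT]
  simp only [substT, List.length_cons, List.length_nil]
  rw [Finset.sum_range_succ, Finset.sum_range_succ, Finset.sum_range_succ,
    Finset.sum_range_zero, powT_one, powT_two, hmul]
  simp [logSeries, oneT, Pi.sub_apply, P_two, powT]
  ring


lemma s0_eq (s : PowerSeries ℚ) (hs : sSpec s) : PowerSeries.coeff 0 s = -1/2 := by
  have h := congrArg (PowerSeries.coeff 2) hs
  rw [PowerSeries.coeff_mul, Finset.Nat.sum_antidiagonal_eq_sum_range_succ_mk] at h
  have e0 : PowerSeries.coeff 0
      (PowerSeries.X * (PowerSeries.rescale (-1) (PowerSeries.exp ℚ) - 1)) = 0 :=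
    PowerSeries.coeff_zero_X_mul _
  have e1 : PowerSeries.coeff 1
      (PowerSeries.X * (PowerSeries.rescale (-1) (PowerSeries.exp ℚ) - 1)) = 0 := by
    rw [show (1:ℕ) = 0 + 1 from rfl, PowerSeries.coeff_succ_X_mul]
    simp [← PowerSeries.coeff_zero_eq_constantCoeff, PowerSeries.coeff_rescale,
      PowerSeries.coeff_exp]
  have e2 : PowerSeries.coeff 2
      (PowerSeries.X * (PowerSeries.rescale (-1) (PowerSeries.exp ℚ) - 1)) = -1 := by
    rw [show (2:ℕ) = 1 + 1 from rfl, PowerSeries.coeff_succ_X_mul]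
    simp [PowerSeries.coeff_rescale, PowerSeries.coeff_exp, PowerSeries.coeff_one]
  rw [Finset.sum_range_succ, Finset.sum_range_succ, Finset.sum_range_succ,
    Finset.sum_range_zero] at h
  norm_num [e0, e1, e2, PowerSeries.coeff_rescale, PowerSeries.coeff_exp,
    PowerSeries.coeff_one, PowerSeries.coeff_X] at h
  rw [PowerSeries.coeff_zero_eq_constantCoeff]
  linarith


lemma substT_nil (F : PowerSeries ℚ) (f : T n) : substT F f [] = PowerSeries.coeff 0 F := by
  simp [substT, powT, oneT]

lemma sandwich (s : PowerSeries ℚ) (a b : Fin n) :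
    mulT (x0 n) (mulT (substT s (Xi n)) (x0 n)) [a, b] = PowerSeries.coeff 0 s := by
  have hinner : ∀ c : Fin n,
      mulT (substT s (Xi n)) (x0 n) [c] = -(PowerSeries.coeff 0 s) := by
    intro c
    show ∑ i ∈ Finset.range 2, substT s (Xi n) ([c].take i) * x0 n ([c].drop i) = _
    rw [Finset.sum_range_succ, Finset.sum_range_succ, Finset.sum_range_zero]
    simp [substT_nil, x0_apply]
  show ∑ i ∈ Finset.range 3,
      x0 n ([a, b].take i) * mulT (substT s (Xi n)) (x0 n) ([a, b].drop i) = _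
  rw [Finset.sum_range_succ, Finset.sum_range_succ, Finset.sum_range_succ,
    Finset.sum_range_zero]
  simp [x0_apply, hinner]

lemma V_one (V : T n) (hV : degGE 2 (V - x0 n)) (c : Fin n) : V [c] = -1 := by
  have h := hV [c] (by simp)
  rw [Pi.sub_apply, x0_apply] at h
  simp at h
  linarith

lemma V_two (V : T n) (hV : degGE 2 (V - x0 n)) (hV1 : dia (-(Xi n)) V = x0 n)
    (a b : Fin n) : V [a, b] = Xi n [a, b] := by
  have h := congrFun hV1 [a, b]
  rw [x0_apply] at h
  show V [a, b] = Xi n [a, b]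
  have hd : dia (-(Xi n)) V [a, b] =
      -((-(Xi n)) [a] * V [a, b] + (-(Xi n)) [a, b] * V [b]) := by
    show -(∑ i ∈ Finset.range 2, _) = _
    rw [Finset.sum_range_succ, Finset.sum_range_succ, Finset.sum_range_zero]
    simp
  rw [hd] at h
  rw [Pi.neg_apply, Pi.neg_apply, Xi_one, V_one V hV] at h
  simp at h
  linarith

lemma sum_ind1 (a b : Fin n) (C : Prop) [Decidable C] :
    (∑ k : Fin n, ∑ l : Fin n, if k = a ∧ l = b ∧ C then (1:ℚ) else 0)
      = if C then 1 else 0 := by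
  simp [ite_and, Finset.sum_ite_eq']

lemma S_eval (a b : Fin n) :
    (∑ k : Fin n, ∑ l : Fin n,
      if k < l then mulT (xgen k) (xgen l) - mulT (xgen l) (xgen k) else 0) [a, b]
    = (if a < b then 1 else 0) - (if b < a then 1 else 0) := by
  rw [Finset.sum_apply]
  have hpt : ∀ k l : Fin n,
      (if k < l then mulT (xgen k) (xgen l) - mulT (xgen l) (xgen k) else 0) [a, b]
      = (if k = a ∧ l = b ∧ a < b then (1:ℚ) else 0)
        - (if k = b ∧ l = a ∧ b < a then 1 else 0) := by
    intro k l
    rw [ite_apply, Pi.sub_apply, Pi.zero_apply, mulT_xgen_xgen, mulT_xgen_xgen]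
    split_ifs <;>
      first
        | (exfalso;
           simp only [List.cons.injEq, and_true, Fin.lt_def, Fin.ext_iff,
             Fin.le_def, not_and, not_lt] at *;
           all_goals omega)
        | norm_num
  have step : (∑ k : Fin n, (∑ l : Fin n,
        if k < l then mulT (xgen k) (xgen l) - mulT (xgen l) (xgen k) else 0) [a, b])
      = ∑ k : Fin n, ∑ l : Fin n,
          ((if k = a ∧ l = b ∧ a < b then (1:ℚ) else 0)
            - (if k = b ∧ l = a ∧ b < a then 1 else 0)) := by
    apply Finset.sum_congr rfl; intro k _
    rw [Finset.sum_apply]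
    exact Finset.sum_congr rfl fun l _ => hpt k l
  rw [step, ← sum_ind1 a b (a < b), ← sum_ind1 b a (b < a),
    ← Finset.sum_sub_distrib]
  apply Finset.sum_congr rfl; intro k _
  rw [← Finset.sum_sub_distrib]

lemma S2_eval (a b : Fin n) :
    (∑ k : Fin n, ∑ l : Fin n, if l < k then mulT (xgen k) (xgen l) else 0) [a, b]
    = if b < a then 1 else 0 := by
  rw [Finset.sum_apply]
  have hpt : ∀ k l : Fin n,
      (if l < k then mulT (xgen k) (xgen l) else 0) [a, b]
      = (if k = a ∧ l = b ∧ b < a then (1:ℚ) else 0) := by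
    intro k l
    rw [ite_apply, Pi.zero_apply, mulT_xgen_xgen]
    split_ifs <;>
      first
        | (exfalso;
           simp only [List.cons.injEq, and_true, Fin.lt_def, Fin.ext_iff,
             Fin.le_def, not_and, not_lt] at *;
           all_goals omega)
        | norm_num
  rw [← sum_ind1 a b (b < a)]
  apply Finset.sum_congr rfl; intro k _
  rw [Finset.sum_apply]
  exact Finset.sum_congr rfl fun l _ => hpt k l

lemma Ssq_eval (a b : Fin n) :
    (∑ k : Fin n, powT (xgen k) 2) [a, b] = if a = b then 1 else 0 := by
  rw [Finset.sum_apply]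
  have hpt : ∀ k : Fin n, powT (xgen k) 2 [a, b]
      = if k = a ∧ a = b then (1:ℚ) else 0 := by
    intro k
    rw [powT_two, mulT_xgen_xgen]
    split_ifs <;>
      first
        | (exfalso;
           simp only [List.cons.injEq, and_true, Fin.lt_def, Fin.ext_iff,
             Fin.le_def, not_and, not_lt] at *;
           all_goals omega)
        | norm_num
  rw [Finset.sum_congr rfl fun k _ => hpt k]
  simp [ite_and, Finset.sum_ite_eq']

end Aux

/-- The degree-2 component of `Y = (-Ξ)⁻¹ + x₀ s(Ξ) x₀` equals
`(1/2)∑_{k<l}[xₖ,xₗ] - (1/2)x₀² = -∑_{k>l} xₖxₗ - (1/2)∑ₖ xₖ²`. -/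
theorem statement12 (n : ℕ) (s : PowerSeries ℚ) (hs : sSpec s)
    (V : T n) (hV : degGE 2 (V - x0 n))
    (hV1 : dia (-(Xi n)) V = x0 n) (hV2 : dia V (-(Xi n)) = x0 n) :
    (∀ w : Word n, w.length = 2 →
      (V + mulT (x0 n) (mulT (substT s (Xi n)) (x0 n))) w =
        ((1/2 : ℚ) • (∑ k : Fin n, ∑ l : Fin n,
            if k < l then mulT (xgen k) (xgen l) - mulT (xgen l) (xgen k) else 0)
          - (1/2 : ℚ) • mulT (x0 n) (x0 n)) w) ∧
    (1/2 : ℚ) • (∑ k : Fin n, ∑ l : Fin n,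
        if k < l then mulT (xgen k) (xgen l) - mulT (xgen l) (xgen k) else 0)
      - (1/2 : ℚ) • mulT (x0 n) (x0 n) =
    -(∑ k : Fin n, ∑ l : Fin n, if l < k then mulT (xgen k) (xgen l) else 0)
      - (1/2 : ℚ) • ∑ k : Fin n, powT (xgen k) 2 := by
  constructor
  · intro w hw
    rcases w with _ | ⟨a, _ | ⟨b, _ | ⟨c, t⟩⟩⟩ <;> simp at hw
    rw [Pi.add_apply, sandwich s a b, s0_eq s hs, V_two V hV hV1 a b, Xi_two,
      Pi.sub_apply, Pi.smul_apply, Pi.smul_apply, S_eval, mulT_x0_x0,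
      smul_eq_mul, smul_eq_mul]
    rcases lt_trichotomy a b with h | h | h
    · simp [h, asymm h, ne_of_lt h]; norm_num
    · simp [h, lt_irrefl]; norm_num
    · simp [h, asymm h, (ne_of_gt h : a ≠ b)]; norm_num
  · funext w
    rcases w with _ | ⟨a, _ | ⟨b, _ | ⟨c, t⟩⟩⟩
    · simp [Pi.sub_apply, Pi.smul_apply, Pi.neg_apply, Finset.sum_apply,
        ite_apply, Pi.zero_apply, mulT_xgen_xgen, mulT_x0_x0, powT_two,
        smul_eq_mul]
    · simp [Pi.sub_apply, Pi.smul_apply, Pi.neg_apply, Finset.sum_apply,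
        ite_apply, Pi.zero_apply, mulT_xgen_xgen, mulT_x0_x0, powT_two,
        smul_eq_mul]
    · rw [Pi.sub_apply, Pi.smul_apply, Pi.smul_apply, S_eval, mulT_x0_x0,
        Pi.sub_apply, Pi.neg_apply, S2_eval, Pi.smul_apply, Ssq_eval,
        smul_eq_mul, smul_eq_mul, smul_eq_mul]
      rcases lt_trichotomy a b with h | h | h
      · simp [h, asymm h, ne_of_lt h]
      · simp [h, lt_irrefl]
      · simp [h, asymm h, (ne_of_gt h : a ≠ b)]; norm_num
    · simp [Pi.sub_apply, Pi.smul_apply, Pi.neg_apply, Finset.sum_apply,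
        ite_apply, Pi.zero_apply, mulT_xgen_xgen, mulT_x0_x0, powT_two,
        smul_eq_mul]
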